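/- Let S ⊆ ℝ² be a bounded measurable set whose topological frontier is the image of a continuous closed curve of length L with L > 1. Then the number of pairs (i,j) ∈ ℤ² such that the open square (i,i+1) × (j,j+1) is contained in S and disjoint from the frontier of S is at least area(S) − 4·L, where area denotes two-dimensional Lebesgue measure. -/

import Mathlib

open MeasureTheory

/-- The open unit grid square with lower-left corner `(i, j)`. -/
def openGridSquare (i j : ℤ) : Set (EuclideanSpace ℝ (Fin 2)) :=
  {p | p 0 ∈ Set.Ioo (i : ℝ) (i + 1) ∧ p 1 ∈ Set.Ioo (j : ℝ) (j + 1)}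

section Aux
open Set ENNReal

noncomputable abbrev E2 := EuclideanSpace ℝ (Fin 2)

lemma sq_eq_preimage (i j : ℤ) :
    openGridSquare i j = (MeasurableEquiv.toLp 2 (Fin 2 → ℝ)).symm ⁻¹'
      (Set.univ.pi fun k : Fin 2 => if k = 0 then Set.Ioo (i:ℝ) (i+1) else Set.Ioo (j:ℝ) (j+1)) := by
  ext p
  simp [openGridSquare, Set.mem_pi, Fin.forall_fin_two, MeasurableEquiv.coe_toLp_symm]

lemma vol_sq (i j : ℤ) : volume (openGridSquare i j) = 1 := by
  rw [sq_eq_preimage, (EuclideanSpace.volume_preserving_symm_measurableEquiv_toLp (Fin 2)).measure_preimage_equiv _]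
  rw [volume_pi_pi]
  simp [Fin.prod_univ_two]

lemma line_null0 (c : ℝ) : volume {p : E2 | p 0 = c} = 0 := by
  have : {p : E2 | p 0 = c} = (MeasurableEquiv.toLp 2 (Fin 2 → ℝ)).symm ⁻¹'
      (Set.univ.pi fun k : Fin 2 => if k = 0 then ({c} : Set ℝ) else Set.univ) := by
    ext p; simp [Set.mem_pi, Fin.forall_fin_two, MeasurableEquiv.coe_toLp_symm]
  rw [this, (EuclideanSpace.volume_preserving_symm_measurableEquiv_toLp (Fin 2)).measure_preimage_equiv _, volume_pi_pi]
  simp [Fin.prod_univ_two]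

lemma line_null1 (c : ℝ) : volume {p : E2 | p 1 = c} = 0 := by
  have : {p : E2 | p 1 = c} = (MeasurableEquiv.toLp 2 (Fin 2 → ℝ)).symm ⁻¹'
      (Set.univ.pi fun k : Fin 2 => if k = 0 then Set.univ else ({c} : Set ℝ)) := by
    ext p; simp [Set.mem_pi, Fin.forall_fin_two, MeasurableEquiv.coe_toLp_symm]
  rw [this, (EuclideanSpace.volume_preserving_symm_measurableEquiv_toLp (Fin 2)).measure_preimage_equiv _, volume_pi_pi]
  simp [Fin.prod_univ_two]

lemma coord_le_edist (p q : E2) (k : Fin 2) :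
    ENNReal.ofReal |p k - q k| ≤ edist p q := by
  rw [edist_dist]
  apply ENNReal.ofReal_le_ofReal
  rw [EuclideanSpace.dist_eq]
  rw [show |p k - q k| = Real.sqrt ((p k - q k) ^ 2) from (Real.sqrt_sq_eq_abs _).symm]
  apply Real.sqrt_le_sqrt
  rw [show (p k - q k) ^ 2 = dist (p k) (q k) ^ 2 by rw [Real.dist_eq, sq_abs]]
  exact Finset.single_le_sum (f := fun i => dist (p i) (q i) ^ 2)
    (fun i _ => sq_nonneg _) (Finset.mem_univ k)

lemma sq_preconnected (i j : ℤ) : IsPreconnected (openGridSquare i j) := by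
  apply Convex.isPreconnected
  have : openGridSquare i j =
      (fun p : E2 => p 0) ⁻¹' Set.Ioo (i:ℝ) (i+1) ∩ (fun p : E2 => p 1) ⁻¹' Set.Ioo (j:ℝ) (j+1) := rfl
  rw [this]
  exact ((convex_Ioo _ _).linear_preimage (EuclideanSpace.projₗ 0 : (E2) →ₗ[ℝ] ℝ)).inter
    ((convex_Ioo _ _).linear_preimage (EuclideanSpace.projₗ 1 : (E2) →ₗ[ℝ] ℝ))

lemma empty_of_not_inner_not_meet (S : Set E2) (i j : ℤ)
    (hnotinner : ¬ (openGridSquare i j ⊆ S ∧ Disjoint (openGridSquare i j) (frontier S)))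
    (hnotmeet : openGridSquare i j ∩ frontier S = ∅) :
    S ∩ openGridSquare i j = ∅ := by
  by_contra h
  obtain ⟨p, hpS, hpQ⟩ := Set.nonempty_iff_ne_empty.2 h
  have hdisj : Disjoint (openGridSquare i j) (frontier S) :=
    Set.disjoint_iff_inter_eq_empty.2 hnotmeet
  have hns : ¬ openGridSquare i j ⊆ S := fun hs => hnotinner ⟨hs, hdisj⟩
  obtain ⟨q, hqQ, hqS⟩ := Set.not_subset.1 hns
  have hQF : ∀ x ∈ openGridSquare i j, x ∉ frontier S := fun x hx hf =>
    (Set.eq_empty_iff_forall_notMem.1 hnotmeet x) ⟨hx, hf⟩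
  have hcover : openGridSquare i j ⊆ interior S ∪ (closure S)ᶜ := by
    intro x hx
    by_cases hc : x ∈ closure S
    · left
      have : x ∉ frontier S := hQF x hx
      rw [frontier, Set.mem_diff] at this
      push_neg at this
      exact this hc
    · right; exact hc
  have h1 : (openGridSquare i j ∩ interior S).Nonempty := by
    refine ⟨p, hpQ, ?_⟩
    have : p ∉ frontier S := hQF p hpQ
    rw [frontier, Set.mem_diff] at this
    push_neg at this
    exact this (subset_closure hpS)
  have h2 : (openGridSquare i j ∩ (closure S)ᶜ).Nonempty := by
    refine ⟨q, hqQ, ?_⟩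
    intro hq
    exact (hQF q hqQ) ⟨hq, fun hi => hqS (interior_subset hi)⟩
  obtain ⟨x, hxQ, hxu, hxv⟩ := (sq_preconnected i j) _ _ isOpen_interior
    (isOpen_compl_iff.2 isClosed_closure) hcover h1 h2
  exact hxv (subset_closure (interior_subset hxu))

lemma pigeonhole5 (q : Fin 5 → E2) (c : Fin 5 → ℤ × ℤ) (hinj : Function.Injective c)
    (hq : ∀ m, q m ∈ openGridSquare (c m).1 (c m).2) :
    ∃ a b : Fin 5, a < b ∧ (1 ≤ |q a 0 - q b 0| ∨ 1 ≤ |q a 1 - q b 1|) := by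
  by_contra hcon
  push_neg at hcon
  have hx : ∀ a b : Fin 5, |q a 0 - q b 0| < 1 := by
    intro a b
    rcases lt_trichotomy a b with h | h | h
    · exact (hcon a b h).1
    · simp [h]
    · rw [abs_sub_comm]; exact (hcon b a h).1
  have hy : ∀ a b : Fin 5, |q a 1 - q b 1| < 1 := by
    intro a b
    rcases lt_trichotomy a b with h | h | h
    · exact (hcon a b h).2
    · simp [h]
    · rw [abs_sub_comm]; exact (hcon b a h).2
  have key : ∀ (f : E2 → ℝ) (d : Fin 5 → ℤ), (∀ a b : Fin 5, |f (q a) - f (q b)| < 1) →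
      (∀ m, f (q m) ∈ Set.Ioo ((d m : ℝ)) (d m + 1)) →
      ∀ a b : Fin 5, d a ≤ d b + 1 := by
    intro f d hab hmem a b
    have h1 : (d a : ℝ) < f (q a) := (hmem a).1
    have h2 : f (q a) - f (q b) < 1 := lt_of_abs_lt (hab a b)
    have h3 : f (q b) < d b + 1 := (hmem b).2
    have : (d a : ℝ) < (d b : ℝ) + 2 := by linarith
    have := (by exact_mod_cast this : d a < d b + 2)
    omega
  have kx : ∀ a b : Fin 5, (c a).1 ≤ (c b).1 + 1 :=
    key (fun p => p 0) (fun m => (c m).1) hx (fun m => (hq m).1)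
  have ky : ∀ a b : Fin 5, (c a).2 ≤ (c b).2 + 1 :=
    key (fun p => p 1) (fun m => (c m).2) hy (fun m => (hq m).2)
  set a0 := (c 0).1 ⊓ (c 1).1 ⊓ (c 2).1 ⊓ (c 3).1 ⊓ (c 4).1 with ha0
  set b0 := (c 0).2 ⊓ (c 1).2 ⊓ (c 2).2 ⊓ (c 3).2 ⊓ (c 4).2 with hb0
  have hmem : ∀ m : Fin 5, c m ∈ (({a0, a0 + 1} : Finset ℤ) ×ˢ ({b0, b0 + 1} : Finset ℤ)) := by
    intro m
    have h1 : a0 ≤ (c m).1 := by fin_cases m <;> simp [ha0] <;> omega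
    have h2 : b0 ≤ (c m).2 := by fin_cases m <;> simp [hb0] <;> omega
    have h3 : (c m).1 ≤ a0 + 1 := by
      have i0 := kx m 0; have i1 := kx m 1; have i2 := kx m 2; have i3 := kx m 3
      have i4 := kx m 4
      simp only [ha0]; omega
    have h4 : (c m).2 ≤ b0 + 1 := by
      have i0 := ky m 0; have i1 := ky m 1; have i2 := ky m 2; have i3 := ky m 3
      have i4 := ky m 4
      simp only [hb0]; omega
    simp only [Finset.mem_product, Finset.mem_insert, Finset.mem_singleton]
    omega
  have hcard : (Finset.univ : Finset (Fin 5)).card ≤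
      (({a0, a0 + 1} : Finset ℤ) ×ˢ ({b0, b0 + 1} : Finset ℤ)).card :=
    Finset.card_le_card_of_injOn c (fun m _ => hmem m) hinj.injOn
  have : (({a0, a0 + 1} : Finset ℤ) ×ˢ ({b0, b0 + 1} : Finset ℤ)).card ≤ 4 := by
    rw [Finset.card_product]
    have h1 : ({a0, a0 + 1} : Finset ℤ).card ≤ 2 := Finset.card_insert_le _ _ |>.trans (by simp)
    have h2 : ({b0, b0 + 1} : Finset ℤ).card ≤ 2 := Finset.card_insert_le _ _ |>.trans (by simp)
    nlinarith
  simp only [Finset.card_univ, Fintype.card_fin] at hcard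
  omega

lemma squares_eq_of_mem (a b : ℤ × ℤ) (p : E2) (ha : p ∈ openGridSquare a.1 a.2)
    (hb : p ∈ openGridSquare b.1 b.2) : a = b := by
  obtain ⟨⟨ha1, ha2⟩, ⟨ha3, ha4⟩⟩ := ha
  obtain ⟨⟨hb1, hb2⟩, ⟨hb3, hb4⟩⟩ := hb
  have e1 : (a.1 : ℝ) < b.1 + 1 := lt_trans ha1 hb2
  have e2 : (b.1 : ℝ) < a.1 + 1 := lt_trans hb1 ha2
  have e3 : (a.2 : ℝ) < b.2 + 1 := lt_trans ha3 hb4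
  have e4 : (b.2 : ℝ) < a.2 + 1 := lt_trans hb3 ha4
  have f1 : a.1 < b.1 + 1 := by exact_mod_cast e1
  have f2 : b.1 < a.1 + 1 := by exact_mod_cast e2
  have f3 : a.2 < b.2 + 1 := by exact_mod_cast e3
  have f4 : b.2 < a.2 + 1 := by exact_mod_cast e4
  have : a.1 = b.1 := by omega
  have : a.2 = b.2 := by omega
  exact Prod.ext (by omega) (by omega)

open Fin.NatCast in
lemma card_meet_le (γ : ℝ → E2) (L : ℝ)
    (hclosed : γ 0 = γ 1)
    (hlen : eVariationOn γ (Set.Icc 0 1) = ENNReal.ofReal L) (hL : 1 < L)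
    (F : Finset (ℤ × ℤ))
    (hF : ∀ ij ∈ F, ∃ t ∈ Set.Icc (0:ℝ) 1, γ t ∈ openGridSquare ij.1 ij.2) :
    (F.card : ℝ) ≤ 4 * L := by
  classical
  -- choose times
  set time : ℤ × ℤ → ℝ := fun ij =>
    if h : ∃ t ∈ Set.Icc (0:ℝ) 1, γ t ∈ openGridSquare ij.1 ij.2 then h.choose else 0 with htimedef
  have htime : ∀ ij ∈ F, time ij ∈ Set.Icc (0:ℝ) 1 ∧ γ (time ij) ∈ openGridSquare ij.1 ij.2 := by
    intro ij hij
    have h := hF ij hij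
    simp only [htimedef, dif_pos h]
    exact ⟨h.choose_spec.1, h.choose_spec.2⟩
  have htinj : Set.InjOn time F := by
    intro a ha b hb hab
    exact squares_eq_of_mem a b (γ (time b)) (hab ▸ (htime a ha).2) ((htime b hb).2)
  rcases le_or_gt F.card 4 with hN4 | hN4
  · have : (F.card : ℝ) ≤ 4 := by exact_mod_cast hN4
    linarith
  -- now F.card ≥ 5
  obtain ⟨n, hn⟩ : ∃ n, F.card = n + 1 := ⟨F.card - 1, by omega⟩
  have hn4 : 4 ≤ n := by omega
  set N := n + 1 with hNdef
  haveI : NeZero N := ⟨by omega⟩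
  set T : Finset ℝ := F.image time with hT
  have hTcard : T.card = N := by rw [hT, Finset.card_image_of_injOn htinj, hn]
  set σ := T.orderIsoOfFin hTcard with hσ
  set τ : Fin N → ℝ := fun m => (σ m : ℝ) with hτ
  have hτmono : StrictMono τ := fun a b h => by
    exact_mod_cast (σ.lt_iff_lt.2 h)
  have hτT : ∀ m, τ m ∈ T := fun m => (σ m).2
  -- squares attached to sorted times
  have hsqex : ∀ m : Fin N, ∃ ij, ij ∈ F ∧ time ij = τ m := by
    intro m
    obtain ⟨ij, h1, h2⟩ := Finset.mem_image.1 (hτT m)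
    exact ⟨ij, h1, h2⟩
  set sq : Fin N → ℤ × ℤ := fun m => (hsqex m).choose with hsqdef
  have hsq : ∀ m, sq m ∈ F ∧ time (sq m) = τ m := fun m => (hsqex m).choose_spec
  set P : Fin N → E2 := fun m => γ (τ m) with hP
  have hPmem : ∀ m, P m ∈ openGridSquare (sq m).1 (sq m).2 := by
    intro m
    have := (htime (sq m) (hsq m).1).2
    rwa [(hsq m).2] at this
  have hsqinj : Function.Injective sq := by
    intro a b hab
    have : τ a = τ b := by rw [← (hsq a).2, ← (hsq b).2, hab]
    exact hτmono.injective this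
  have hτmem : ∀ m, τ m ∈ Set.Icc (0:ℝ) 1 := by
    intro m
    obtain ⟨ij, h1, h2⟩ := hsqex m
    exact h2 ▸ (htime ij h1).1
  -- gaps
  have hIcc : ∀ a b c : ℝ, a ≤ b → b ≤ c →
      eVariationOn γ (Set.Icc a b) + eVariationOn γ (Set.Icc b c)
        = eVariationOn γ (Set.Icc a c) := by
    intro a b c hab hbc
    have := eVariationOn.Icc_add_Icc γ (s := Set.univ) hab hbc (Set.mem_univ b)
    simpa using this
  set gap : Fin N → ENNReal := fun m =>
    if m < Fin.last n then eVariationOn γ (Set.Icc (τ m) (τ (m + 1)))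
    else eVariationOn γ (Set.Icc (τ m) 1) + eVariationOn γ (Set.Icc 0 (τ 0)) with hgap
  -- Key 1
  have key1 : ∀ m : Fin N, edist (P m) (P (m + 1)) ≤ gap m := by
    intro m
    by_cases hm : m < Fin.last n
    · rw [hgap]
      simp only [if_pos hm]
      have hle : τ m ≤ τ (m + 1) := (hτmono (Fin.lt_add_one_iff.2 hm)).le
      exact eVariationOn.edist_le γ (Set.left_mem_Icc.2 hle) (Set.right_mem_Icc.2 hle)
    · have hm' : m = Fin.last n := by
        rcases Fin.lt_or_eq_of_le (Fin.le_last m) with h | h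
        · exact absurd h hm
        · exact h
      rw [hgap]
      simp only [if_neg hm]
      have h10 : m + 1 = 0 := by rw [hm', Fin.last_add_one]
      rw [h10]
      calc edist (P m) (P 0) ≤ edist (P m) (γ 1) + edist (γ 1) (P 0) := edist_triangle _ _ _
        _ ≤ eVariationOn γ (Set.Icc (τ m) 1) + eVariationOn γ (Set.Icc 0 (τ 0)) := by
            apply add_le_add
            · exact eVariationOn.edist_le γ (Set.left_mem_Icc.2 (hτmem m).2)
                (Set.right_mem_Icc.2 (hτmem m).2)
            · rw [← hclosed]
              exact eVariationOn.edist_le γ (Set.left_mem_Icc.2 (hτmem 0).1)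
                (Set.right_mem_Icc.2 (hτmem 0).1)
  have hτcast : ∀ k : ℕ, k < N → ((k : Fin N) : ℕ) = k := fun k hk => Fin.val_cast_of_lt hk
  have hgapnat : ∀ k : ℕ, k < n → gap (k : Fin N) =
      eVariationOn γ (Set.Icc (τ (k : Fin N)) (τ (((k+1 : ℕ)) : Fin N))) := by
    intro k hk
    have h1 : (k : Fin N) < Fin.last n := by
      rw [Fin.lt_iff_val_lt_val, hτcast k (by omega)]
      simpa using hk
    rw [hgap]
    simp only [if_pos h1]
    congr 2
    push_cast
    ring
  have tel : ∀ k : ℕ, k ≤ n →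
      eVariationOn γ (Set.Icc 0 (τ 0)) + ∑ m ∈ Finset.range k, gap (m : Fin N)
        = eVariationOn γ (Set.Icc 0 (τ (k : Fin N))) := by
    intro k
    induction k with
    | zero => intro _; simp
    | succ k ih =>
      intro hk
      rw [Finset.sum_range_succ, ← add_assoc, ih (by omega), hgapnat k (by omega)]
      exact hIcc 0 (τ (k : Fin N)) (τ ((k+1 : ℕ) : Fin N)) (hτmem _).1
        (hτmono (by rw [Fin.lt_iff_val_lt_val, hτcast k (by omega), hτcast (k+1) (by omega)]; omega)).le
  have sum_gap : ∑ m : Fin N, gap m = ENNReal.ofReal L := by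
    have h1 : ∑ m : Fin N, gap m = ∑ k ∈ Finset.range N, gap (k : Fin N) := by
      rw [← Fin.sum_univ_eq_sum_range (fun k => gap (k : Fin N)) N]
      exact Finset.sum_congr rfl (fun m _ => by rw [Fin.cast_val_eq_self])
    have h2 : gap ((n : ℕ) : Fin N) = eVariationOn γ (Set.Icc (τ ((n : ℕ) : Fin N)) 1)
        + eVariationOn γ (Set.Icc 0 (τ 0)) := by
      rw [hgap]
      have hnot : ¬ ((n : Fin N) < Fin.last n) := by
        rw [Fin.lt_iff_val_lt_val, hτcast n (by omega)]
        simp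
      simp only [if_neg hnot]
    have hfin : eVariationOn γ (Set.Icc (0:ℝ) (τ 0)) ≠ ⊤ := by
      apply ne_top_of_le_ne_top (b := ENNReal.ofReal L) ENNReal.ofReal_ne_top
      rw [← hlen]
      exact eVariationOn.mono γ (Set.Icc_subset_Icc le_rfl (hτmem 0).2)
    have main : eVariationOn γ (Set.Icc (0:ℝ) (τ 0)) + ∑ m : Fin N, gap m
        = eVariationOn γ (Set.Icc (0:ℝ) (τ 0)) + ENNReal.ofReal L := by
      have hrange : ∑ k ∈ Finset.range N, gap (k : Fin N)
          = ∑ k ∈ Finset.range n, gap (k : Fin N) + gap ((n : ℕ) : Fin N) :=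
        Finset.sum_range_succ _ n
      rw [h1, hrange, ← add_assoc, tel n le_rfl, h2,
        ← add_assoc, hIcc 0 (τ ((n:ℕ) : Fin N)) 1 (hτmem _).1 (hτmem _).2, hlen, add_comm]
    exact (ENNReal.add_right_inj hfin).1 main
  have key3 : ∀ m : Fin N, (1 : ENNReal) ≤ ∑ j ∈ Finset.range 4, gap (m + (j : Fin N)) := by
    intro m
    set q : Fin 5 → E2 := fun j => P (m + (j.val : Fin N)) with hqdef
    set c : Fin 5 → ℤ × ℤ := fun j => sq (m + (j.val : Fin N)) with hcdef
    have hcinj : Function.Injective c := by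
      intro a b hab
      have ha5 := a.isLt
      have hb5 := b.isLt
      have h1 := hsqinj hab
      have h2 : ((a.val : Fin N)) = ((b.val : Fin N)) := by
        have := add_left_cancel h1
        exact this
      have h3 : a.val = b.val := by
        have := congrArg Fin.val h2
        rwa [hτcast a.val (by omega), hτcast b.val (by omega)] at this
      exact Fin.ext h3
    obtain ⟨a, b, hab, hor⟩ := pigeonhole5 q c hcinj (fun j => hPmem _)
    have habv : (a : ℕ) < (b : ℕ) := hab
    have chain : edist (q a) (q b) ≤ ∑ j ∈ Finset.Ico (a : ℕ) (b : ℕ), gap (m + (j : Fin N)) := by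
      calc edist (q a) (q b)
          ≤ ∑ j ∈ Finset.Ico (a : ℕ) (b : ℕ),
              edist (P (m + (j : Fin N))) (P (m + (((j+1 : ℕ)) : Fin N))) :=
            edist_le_Ico_sum_edist (fun k : ℕ => P (m + (k : Fin N))) (le_of_lt habv)
        _ ≤ ∑ j ∈ Finset.Ico (a : ℕ) (b : ℕ), gap (m + (j : Fin N)) := by
            apply Finset.sum_le_sum
            intro j hj
            have hcast : ((j+1 : ℕ) : Fin N) = (j : Fin N) + 1 := by push_cast; ring
            rw [hcast, ← add_assoc]
            exact key1 _
    have hsubset : Finset.Ico (a : ℕ) (b : ℕ) ⊆ Finset.range 4 := by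
      intro j hj
      simp only [Finset.mem_Ico] at hj
      simp only [Finset.mem_range]
      have := b.isLt
      omega
    have hle2 : ∑ j ∈ Finset.Ico (a : ℕ) (b : ℕ), gap (m + (j : Fin N))
        ≤ ∑ j ∈ Finset.range 4, gap (m + (j : Fin N)) :=
      Finset.sum_le_sum_of_subset hsubset
    have h1e : (1 : ENNReal) ≤ edist (q a) (q b) := by
      rcases hor with h | h
      · calc (1:ENNReal) = ENNReal.ofReal 1 := by simp
          _ ≤ ENNReal.ofReal |q a 0 - q b 0| := ENNReal.ofReal_le_ofReal h
          _ ≤ edist (q a) (q b) := coord_le_edist _ _ 0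
      · calc (1:ENNReal) = ENNReal.ofReal 1 := by simp
          _ ≤ ENNReal.ofReal |q a 1 - q b 1| := ENNReal.ofReal_le_ofReal h
          _ ≤ edist (q a) (q b) := coord_le_edist _ _ 1
    exact le_trans h1e (le_trans chain hle2)
  have key4 : ∑ m : Fin N, ∑ j ∈ Finset.range 4, gap (m + (j : Fin N))
      = 4 * ENNReal.ofReal L := by
    rw [Finset.sum_comm]
    have hshift : ∀ j : ℕ, ∑ m : Fin N, gap (m + (j : Fin N)) = ENNReal.ofReal L := by
      intro j
      rw [← sum_gap]
      exact Fintype.sum_equiv (Equiv.addRight ((j : Fin N))) _ _ (fun m => rfl)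
    rw [Finset.sum_congr rfl (fun j _ => hshift j)]
    simp [Finset.sum_const, Finset.card_range]
  have hNle : (N : ENNReal) ≤ 4 * ENNReal.ofReal L := by
    calc (N : ENNReal) = ∑ _m : Fin N, 1 := by simp
      _ ≤ ∑ m : Fin N, ∑ j ∈ Finset.range 4, gap (m + (j : Fin N)) :=
          Finset.sum_le_sum (fun m _ => key3 m)
      _ = 4 * ENNReal.ofReal L := key4
  rw [hn]
  have h4L : (4 : ENNReal) * ENNReal.ofReal L = ENNReal.ofReal (4 * L) := by
    rw [ENNReal.ofReal_mul (by norm_num)]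
    simp
  rw [h4L] at hNle
  exact (ENNReal.ofReal_le_ofReal_iff (by positivity)).1 (by rwa [ENNReal.ofReal_natCast])

lemma vol_le_tsum (S : Set E2) :
    volume S ≤ ∑' ij : ℤ × ℤ, volume (S ∩ openGridSquare ij.1 ij.2) := by
  classical
  set lines : Set E2 := {p | (∃ k : ℤ, p 0 = k) ∨ (∃ k : ℤ, p 1 = k)} with hlines
  have hlinesnull : volume lines = 0 := by
    have : lines = (⋃ k : ℤ, {p : E2 | p 0 = k}) ∪ (⋃ k : ℤ, {p : E2 | p 1 = k}) := by
      ext p; simp [hlines]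
    rw [this]
    exact measure_union_null (measure_iUnion_null fun k => line_null0 k)
      (measure_iUnion_null fun k => line_null1 k)
  have hcover : S ⊆ (⋃ ij : ℤ × ℤ, S ∩ openGridSquare ij.1 ij.2) ∪ lines := by
    intro p hp
    by_cases hl : p ∈ lines
    · exact Or.inr hl
    · left
      rw [hlines, Set.mem_setOf_eq] at hl
      push_neg at hl
      refine Set.mem_iUnion.2 ⟨(⌊p 0⌋, ⌊p 1⌋), hp, ?_, ?_⟩
      · exact ⟨lt_of_le_of_ne (Int.floor_le _) (fun h => hl.1 ⌊p 0⌋ h.symm),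
          Int.lt_floor_add_one _⟩
      · exact ⟨lt_of_le_of_ne (Int.floor_le _) (fun h => hl.2 ⌊p 1⌋ h.symm),
          Int.lt_floor_add_one _⟩
  calc volume S ≤ volume ((⋃ ij : ℤ × ℤ, S ∩ openGridSquare ij.1 ij.2) ∪ lines) :=
        measure_mono hcover
    _ ≤ volume (⋃ ij : ℤ × ℤ, S ∩ openGridSquare ij.1 ij.2) + volume lines :=
        measure_union_le _ _
    _ = volume (⋃ ij : ℤ × ℤ, S ∩ openGridSquare ij.1 ij.2) := by rw [hlinesnull, add_zero]
    _ ≤ ∑' ij : ℤ × ℤ, volume (S ∩ openGridSquare ij.1 ij.2) := measure_iUnion_le _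


/-- If `S ⊆ ℝ²` is a bounded measurable set whose frontier is the image of a continuous closed
curve of length `L > 1`, then at least `area(S) − 4·L` of the open unit grid squares are
contained in `S` and disjoint from the frontier of `S` (inner precincts). -/
theorem card_inner_precincts_ge (S : Set (EuclideanSpace ℝ (Fin 2)))
    (hSmeas : MeasurableSet S) (hSbdd : Bornology.IsBounded S)
    (γ : ℝ → EuclideanSpace ℝ (Fin 2)) (L : ℝ)
    (hcont : ContinuousOn γ (Set.Icc 0 1)) (hclosed : γ 0 = γ 1)
    (hfront : frontier S = γ '' Set.Icc 0 1)
    (hlen : eVariationOn γ (Set.Icc 0 1) = ENNReal.ofReal L) (hL : 1 < L) :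
    ENNReal.ofReal ((volume S).toReal - 4 * L)
      ≤ {ij : ℤ × ℤ | openGridSquare ij.1 ij.2 ⊆ S ∧
          Disjoint (openGridSquare ij.1 ij.2) (frontier S)}.encard := by
  classical
  set I : Set (ℤ × ℤ) := {ij : ℤ × ℤ | openGridSquare ij.1 ij.2 ⊆ S ∧
      Disjoint (openGridSquare ij.1 ij.2) (frontier S)} with hI
  set M : Set (ℤ × ℤ) := {ij : ℤ × ℤ | (openGridSquare ij.1 ij.2 ∩ frontier S).Nonempty}
    with hM
  -- any finset inside M has card ≤ 4L
  have hMcard : ∀ F : Finset (ℤ × ℤ), ↑F ⊆ M → (F.card : ℝ) ≤ 4 * L := by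
    intro F hFM
    apply card_meet_le γ L hclosed hlen hL
    intro ij hij
    obtain ⟨p, hpQ, hpF⟩ := hFM hij
    rw [hfront] at hpF
    obtain ⟨t, ht, hγt⟩ := hpF
    exact ⟨t, ht, hγt ▸ hpQ⟩
  have hMfin : M.Finite := by
    by_contra hinf
    have hinf' : M.Infinite := hinf
    obtain ⟨F, hFM, hFcard⟩ := hinf'.exists_subset_card_eq (⌈4 * L⌉.toNat + 1)
    have h1 := hMcard F hFM
    rw [hFcard] at h1
    have h2 : (4 * L : ℝ) ≤ ⌈4 * L⌉.toNat := by
      have : (4 * L : ℝ) ≤ ⌈4 * L⌉ := Int.le_ceil _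
      have h3 : (⌈4 * L⌉ : ℝ) ≤ ⌈4 * L⌉.toNat := by
        exact_mod_cast Int.self_le_toNat _
      linarith
    push_cast at h1
    linarith
  rcases Set.finite_or_infinite I with hIfin | hIinf
  swap
  · rw [hIinf.encard_eq]
    exact le_top
  -- both finite
  have hvol : volume S ≤ (hIfin.toFinset.card : ENNReal) + (hMfin.toFinset.card : ENNReal) := by
    calc volume S ≤ ∑' ij : ℤ × ℤ, volume (S ∩ openGridSquare ij.1 ij.2) := vol_le_tsum S
      _ ≤ ∑' ij : ℤ × ℤ, (I ∪ M).indicator (fun _ => (1 : ENNReal)) ij := by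
          apply Summable.tsum_le_tsum _ ENNReal.summable ENNReal.summable
          intro ij
          by_cases hij : ij ∈ I ∪ M
          · rw [Set.indicator_of_mem hij]
            calc volume (S ∩ openGridSquare ij.1 ij.2)
                ≤ volume (openGridSquare ij.1 ij.2) := measure_mono Set.inter_subset_right
              _ = 1 := vol_sq _ _
          · rw [Set.indicator_of_notMem hij]
            have h1 : ¬ (openGridSquare ij.1 ij.2 ⊆ S ∧
                Disjoint (openGridSquare ij.1 ij.2) (frontier S)) := fun h => hij (Or.inl h)
            have h2 : openGridSquare ij.1 ij.2 ∩ frontier S = ∅ := by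
              by_contra h
              exact hij (Or.inr (Set.nonempty_iff_ne_empty.2 h))
            rw [empty_of_not_inner_not_meet S ij.1 ij.2 h1 h2]
            simp
      _ = ∑ ij ∈ (hIfin.union hMfin).toFinset,
            (I ∪ M).indicator (fun _ => (1 : ENNReal)) ij := by
          apply tsum_eq_sum
          intro ij hij
          apply Set.indicator_of_notMem
          rwa [← (hIfin.union hMfin).mem_toFinset]
      _ ≤ ∑ ij ∈ (hIfin.union hMfin).toFinset, 1 := by
          apply Finset.sum_le_sum
          intro ij _
          by_cases h : ij ∈ I ∪ M
          · rw [Set.indicator_of_mem h]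
          · rw [Set.indicator_of_notMem h]; exact zero_le
      _ = ((hIfin.union hMfin).toFinset.card : ENNReal) := by simp
      _ ≤ (hIfin.toFinset.card : ENNReal) + (hMfin.toFinset.card : ENNReal) := by
          have : (hIfin.union hMfin).toFinset ⊆ hIfin.toFinset ∪ hMfin.toFinset := by
            intro x hx
            rw [Set.Finite.mem_toFinset] at hx
            rw [Finset.mem_union, Set.Finite.mem_toFinset, Set.Finite.mem_toFinset]
            exact hx
          calc ((hIfin.union hMfin).toFinset.card : ENNReal)
              ≤ ((hIfin.toFinset ∪ hMfin.toFinset).card : ENNReal) := by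
                exact_mod_cast Nat.cast_le.2 (Finset.card_le_card this)
            _ ≤ _ := by exact_mod_cast Nat.cast_le.2 (Finset.card_union_le _ _)
  have hvolfin : volume S ≠ ⊤ := hSbdd.measure_lt_top.ne
  have hreal : (volume S).toReal ≤ (hIfin.toFinset.card : ℝ) + (hMfin.toFinset.card : ℝ) := by
    have := ENNReal.toReal_mono (by simp) hvol
    rwa [ENNReal.toReal_add (by simp) (by simp), ENNReal.toReal_natCast,
      ENNReal.toReal_natCast] at this
  have hMle : (hMfin.toFinset.card : ℝ) ≤ 4 * L :=
    hMcard hMfin.toFinset (fun x hx => hMfin.mem_toFinset.1 hx)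
  have hfinal : (volume S).toReal - 4 * L ≤ (hIfin.toFinset.card : ℝ) := by linarith
  calc ENNReal.ofReal ((volume S).toReal - 4 * L)
      ≤ ENNReal.ofReal (hIfin.toFinset.card : ℝ) := ENNReal.ofReal_le_ofReal hfinal
    _ = (hIfin.toFinset.card : ENNReal) := ENNReal.ofReal_natCast _
    _ = I.encard := by
        rw [hIfin.encard_eq_coe_toFinset_card]
        simp

end Aux
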